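/- Hohenberg–Kohn theorem for Coulomb systems (abstract form): Let 𝕍_C be the class of Coulomb potentials on ℝ³ and suppose that for each v ∈ 𝕍_C with a normalized ground state Ψ_v of H_v = H₀ + Σᵢ v(xᵢ), the conclusions of the variational lemma hold (equal densities ρ_v = ρ_{v'} imply (Σᵢ(v'−v)(xᵢ) − ΔE)Ψ_v = 0 a.e.). Then the map v ↦ ρ_v from 𝕍_C to ground-state densities is injective: ρ_v = ρ_{v'} implies v = v' (with no additive-constant ambiguity). -/

import Mathlib

open MeasureTheory

/-- `v` is a Coulomb potential with singular set `S`. -/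
def IsCoulombPot (v : EuclideanSpace ℝ (Fin 3) → ℝ)
    (S : Set (EuclideanSpace ℝ (Fin 3))) : Prop :=
  ∃ M : ℕ, 1 ≤ M ∧ ∃ (Z : Fin M → ℝ) (r : Fin M → EuclideanSpace ℝ (Fin 3)),
    Function.Injective r ∧ S = Set.range r ∧
    ∀ x ∉ S, v x = -∑ j, Z j / ‖x - r j‖



open Set Filter Topology Metric
open scoped Pointwise

local notation "E3" => EuclideanSpace ℝ (Fin 3)

lemma analyticAt_rlog {x : ℝ} (hx : 0 < x) : AnalyticAt ℝ Real.log x := by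
  have h1 : AnalyticAt ℝ (fun y : ℝ => Complex.log (Complex.ofRealCLM y)) x := by
    have hc : AnalyticAt ℝ Complex.log ((x : ℂ)) :=
      (analyticAt_clog (Complex.ofReal_mem_slitPlane.2 hx)).restrictScalars
    exact hc.comp (Complex.ofRealCLM.analyticAt x)
  have h2 : AnalyticAt ℝ (fun y : ℝ => (Complex.log (Complex.ofRealCLM y)).re) x :=
    (Complex.reCLM.analyticAt _).comp h1
  have : (fun y : ℝ => (Complex.log (Complex.ofRealCLM y)).re) = Real.log := by
    funext y; simpa using Complex.log_ofReal_re y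
  rwa [this] at h2

lemma analyticAt_rsqrt {x : ℝ} (hx : 0 < x) : AnalyticAt ℝ Real.sqrt x := by
  have h1 : AnalyticAt ℝ (fun y : ℝ => Real.exp (Real.log y / 2)) x :=
    analyticAt_rexp.comp ((analyticAt_rlog hx).div analyticAt_const two_ne_zero)
  apply h1.congr
  have : ∀ᶠ y in nhds x, 0 < y := eventually_gt_nhds hx
  filter_upwards [this] with y hy
  have h2 : (Real.exp (Real.log y / 2)) ^ 2 = y := by
    rw [← Real.exp_nat_mul]
    push_cast
    rw [mul_div_cancel₀ _ (two_ne_zero), Real.exp_log hy]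
  conv_rhs => rw [← h2, Real.sqrt_sq (Real.exp_nonneg _)]

/-- zeros of a not-identically-zero analytic function on a preconnected open subset of ℝ
are countable. -/
lemma countable_zeros {U : Set ℝ} (hU : IsOpen U) (hUc : IsPreconnected U)
    {f : ℝ → ℝ} (hf : AnalyticOnNhd ℝ f U) {x₀ : ℝ} (hx₀ : x₀ ∈ U) (hfx₀ : f x₀ ≠ 0) :
    Set.Countable {x ∈ U | f x = 0} := by
  set Z := {x ∈ U | f x = 0} with hZ
  have hiso : ∀ z ∈ Z, ∀ᶠ x in 𝓝[≠] z, f x ≠ 0 := by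
    intro z hz
    rcases (hf z hz.1).eventually_eq_zero_or_eventually_ne_zero with h | h
    · exfalso
      have : EqOn f 0 U :=
        hf.eqOn_zero_of_preconnected_of_frequently_eq_zero hUc hz.1
          (h.filter_mono nhdsWithin_le_nhds).frequently
      exact hfx₀ (this hx₀)
    · exact h
  have hdisc : DiscreteTopology Z := by
    rw [discreteTopology_subtype_iff]
    intro z hz
    rw [← Filter.empty_mem_iff_bot]
    refine Filter.mem_of_superset
      (Filter.inter_mem_inf (hiso z hz) (Filter.mem_principal_self Z)) ?_
    rintro x ⟨hx1, hx2⟩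
    exact absurd hx2.2 hx1
  have : Countable Z := by
    have : TopologicalSpace.SeparableSpace Z := TopologicalSpace.SecondCountableTopology.to_separableSpace
    exact (TopologicalSpace.separableSpace_iff_countable).1 this
  exact Set.countable_coe_iff.mp this

lemma sum_level_null {w : E3 → ℝ} (hw : Measurable w)
    (hlev : ∀ t : ℝ, volume {x : E3 | w x = t} = 0) :
    ∀ N : ℕ, 1 ≤ N → ∀ c : ℝ,
      volume {X : Fin N → E3 | ∑ i, w (X i) = c} = 0 := by
  intro N hN
  induction N, hN using Nat.le_induction with
  | base =>
      intro c
      have he : MeasurePreserving (MeasurableEquiv.funUnique (Fin 1) E3)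
          (volume : Measure (Fin 1 → E3)) (volume : Measure E3) := by
        exact measurePreserving_funUnique (volume : Measure E3) (Fin 1)
      have hs : {X : Fin 1 → E3 | ∑ i, w (X i) = c}
          = (MeasurableEquiv.funUnique (Fin 1) E3) ⁻¹' {x : E3 | w x = c} := by
        ext X
        simp [MeasurableEquiv.funUnique, Fin.sum_univ_one]
      have hms : MeasurableSet {x : E3 | w x = c} := hw (measurableSet_singleton c)
      rw [hs, he.measure_preimage hms.nullMeasurableSet]
      exact hlev c
  | succ N hN1 ih =>
      intro c
      have he : MeasurePreserving (MeasurableEquiv.piFinSuccAbove (fun _ : Fin (N+1) => E3) 0)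
          (volume : Measure (Fin (N+1) → E3))
          ((volume : Measure E3).prod (volume : Measure (Fin N → E3))) := by
        have := measurePreserving_piFinSuccAbove (fun _ : Fin (N+1) => (volume : Measure E3)) 0
        simpa [volume_pi] using this
      set B : Set (E3 × (Fin N → E3)) := {p | w p.1 + ∑ j, w (p.2 j) = c} with hB
      have hmB : MeasurableSet B := by
        have : Measurable fun p : E3 × (Fin N → E3) => w p.1 + ∑ j, w (p.2 j) :=
          (hw.comp measurable_fst).add
            (Finset.measurable_sum _ fun j _ =>
              hw.comp ((measurable_pi_apply j).comp measurable_snd))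
        exact this (measurableSet_singleton c)
      have hs : {X : Fin (N+1) → E3 | ∑ i, w (X i) = c}
          = (MeasurableEquiv.piFinSuccAbove (fun _ : Fin (N+1) => E3) 0) ⁻¹' B := by
        ext X
        simp only [hB, MeasurableEquiv.piFinSuccAbove, MeasurableEquiv.coe_mk,
          Set.mem_preimage, Set.mem_setOf_eq]
        rw [Fin.sum_univ_succ]
        simp [Fin.succAbove, Fin.tail]
      rw [hs, he.measure_preimage hmB.nullMeasurableSet]
      rw [Measure.measure_prod_null hmB]
      refine Filter.Eventually.of_forall fun x => ?_
      have : (Prod.mk x ⁻¹' B) = {y : Fin N → E3 | ∑ j, w (y j) = c - w x} := by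
        ext y; simp [hB]; constructor <;> intro h <;> linarith
      show volume (Prod.mk x ⁻¹' B) = 0
      rw [this]
      exact ih (c - w x)

lemma toSphere_singleton_null (ω : sphere (0:E3) 1) :
    (volume : Measure E3).toSphere {ω} = 0 := by
  rw [Measure.toSphere_apply' _ (measurableSet_singleton ω), Set.image_singleton]
  have hsub : (Set.Ioo (0:ℝ) 1 • ({(ω : E3)} : Set E3)) ⊆ (Submodule.span ℝ {(ω : E3)} : Set E3) := by
    rintro x hx
    rcases Set.mem_smul.1 hx with ⟨r, hr, y, hy, rfl⟩
    rcases Set.mem_singleton_iff.1 hy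
    exact Submodule.smul_mem _ r (Submodule.mem_span_singleton_self _)
  have hne : (Submodule.span ℝ {(ω : E3)}) ≠ ⊤ := by
    intro h
    have h1 : Module.finrank ℝ (Submodule.span ℝ {(ω : E3)}) = 1 :=
      finrank_span_singleton (ne_of_mem_sphere ω.2 one_ne_zero)
    rw [h, finrank_top] at h1
    rw [finrank_euclideanSpace_fin] at h1
    norm_num at h1
  rw [measure_mono_null hsub (Measure.addHaar_submodule _ _ hne)]
  simp

lemma radial_countable (P : Finset E3) (A : E3 → ℝ) (p₀ : E3) (hp₀ : p₀ ∈ P)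
    (hA : A p₀ ≠ 0) (ω : E3) (hω : ‖ω‖ = 1)
    (hgood : ∀ p ∈ P, p ≠ p₀ → ∀ s : ℝ, 0 < s → s • ω ≠ p - p₀) (t : ℝ) :
    Set.Countable {s ∈ Ioi (0:ℝ) | (∑ p ∈ P, A p / ‖(p₀ + s • ω) - p‖) = t} := by
  classical
  set q : E3 → ℝ → ℝ := fun p s => s^2 - 2*(s * (inner ℝ ω (p - p₀) : ℝ)) + ‖p - p₀‖^2 with hq
  have hnorm_eq : ∀ (p : E3) (s : ℝ), ‖(p₀ + s • ω) - p‖ = Real.sqrt (q p s) := by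
    intro p s
    have h1 : (p₀ + s • ω) - p = s • ω - (p - p₀) := by abel
    rw [h1, ← Real.sqrt_sq (norm_nonneg _)]
    congr 1
    rw [@norm_sub_sq_real E3 _ _ (s • ω) (p - p₀), norm_smul, hω]
    rw [real_inner_smul_left]
    simp [hq]
  have hqpos : ∀ p ∈ P, ∀ s : ℝ, 0 < s → 0 < q p s := by
    intro p hp s hs
    have h0 : s • ω - (p - p₀) ≠ 0 := by
      rcases eq_or_ne p p₀ with rfl | hpp
      · simp only [sub_self, sub_zero]
        exact smul_ne_zero hs.ne' (by intro h; rw [h] at hω; simp at hω)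
      · exact sub_ne_zero.2 (hgood p hp hpp s hs)
    have h1 : 0 < ‖s • ω - (p - p₀)‖ := norm_pos_iff.2 h0
    have h2 : ‖(p₀ + s • ω) - p‖ = ‖s • ω - (p - p₀)‖ := by
      congr 1; abel
    have h3 := hnorm_eq p s
    rw [h2] at h3
    rw [h3] at h1
    exact Real.sqrt_pos.mp h1
  set f : ℝ → ℝ := fun s => (∑ p ∈ P, A p / Real.sqrt (q p s)) - t with hf
  -- analyticity
  have hanal : AnalyticOnNhd ℝ f (Ioi (0:ℝ)) := by
    intro s hs
    refine AnalyticAt.sub ?_ analyticAt_const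
    refine Finset.analyticAt_fun_sum _ fun p hp => ?_
    have hq0 : 0 < q p s := hqpos p hp s hs
    have hqa : AnalyticAt ℝ (q p) s := by
      apply AnalyticAt.add
      apply AnalyticAt.sub
      · exact (analyticAt_id).pow 2
      · exact analyticAt_const.mul (analyticAt_id.mul analyticAt_const)
      · exact analyticAt_const
    have hsq : AnalyticAt ℝ (fun s => Real.sqrt (q p s)) s :=
      (analyticAt_rsqrt hq0).comp hqa
    exact analyticAt_const.div hsq (by positivity)
  -- witness
  have hwit : ∃ s₀ ∈ Ioi (0:ℝ), f s₀ ≠ 0 := by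
    by_contra hcon
    push_neg at hcon
    set g : ℝ → ℝ := fun s => ∑ p ∈ P.erase p₀, A p / Real.sqrt (q p s) with hg
    have hq00 : ∀ p ∈ P.erase p₀, 0 < q p 0 := by
      intro p hp
      have hpp : p ≠ p₀ := Finset.ne_of_mem_erase hp
      have : p - p₀ ≠ 0 := sub_ne_zero.2 hpp
      have : 0 < ‖p - p₀‖ := norm_pos_iff.2 this
      simp only [hq]
      nlinarith
    have hgt : Tendsto g (nhdsWithin 0 (Ioi 0)) (nhds (g 0)) := by
      apply Tendsto.mono_left _ nhdsWithin_le_nhds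
      apply tendsto_finset_sum
      intro p hp
      have hcq : ContinuousAt (q p) 0 := by fun_prop
      have : ContinuousAt (fun s => A p / Real.sqrt (q p s)) 0 := by
        apply ContinuousAt.div continuousAt_const
        · exact Real.continuous_sqrt.continuousAt.comp hcq
        · have := hq00 p hp
          positivity
      exact this
    have heq : ∀ᶠ s in nhdsWithin 0 (Ioi (0:ℝ)), A p₀ / s = t - g s := by
      filter_upwards [self_mem_nhdsWithin] with s hs
      have hs' : (0:ℝ) < s := hs
      have hsum : (∑ p ∈ P, A p / Real.sqrt (q p s)) - t = 0 := hcon s hs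
      have hsplit : (∑ p ∈ P, A p / Real.sqrt (q p s))
          = A p₀ / Real.sqrt (q p₀ s) + g s := (Finset.add_sum_erase P _ hp₀).symm
      have hq0s : q p₀ s = s^2 := by simp [hq]
      have : Real.sqrt (q p₀ s) = s := by rw [hq0s, Real.sqrt_sq hs'.le]
      rw [hsplit, this] at hsum
      linarith
    have h1 : Tendsto (fun s => A p₀ / s) (nhdsWithin 0 (Ioi (0:ℝ))) (nhds (t - g 0)) := by
      apply Tendsto.congr' (EventuallyEq.symm heq)
      exact (tendsto_const_nhds.sub hgt)
    have h2 : Tendsto (fun s : ℝ => s⁻¹) (nhdsWithin 0 (Ioi (0:ℝ)))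
        (nhds ((A p₀)⁻¹ * (t - g 0))) := by
      have := h1.const_mul ((A p₀)⁻¹)
      apply this.congr
      intro s
      field_simp
    exact not_tendsto_nhds_of_tendsto_atTop tendsto_inv_nhdsGT_zero _ h2
  obtain ⟨s₀, hs₀, hfs₀⟩ := hwit
  have hcnt := countable_zeros isOpen_Ioi isPreconnected_Ioi hanal hs₀ hfs₀
  apply Set.Countable.mono _ hcnt
  intro s hs
  refine ⟨hs.1, ?_⟩
  have : ∑ p ∈ P, A p / ‖(p₀ + s • ω) - p‖ = ∑ p ∈ P, A p / Real.sqrt (q p s) := by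
    apply Finset.sum_congr rfl
    intro p hp
    rw [hnorm_eq]
  show (∑ p ∈ P, A p / Real.sqrt (q p s)) - t = 0
  rw [← this]
  simp only [Set.mem_setOf_eq] at hs
  rw [hs.2]
  ring

lemma levelset_null (P : Finset E3) (A : E3 → ℝ) (p₀ : E3) (hp₀ : p₀ ∈ P)
    (hA : A p₀ ≠ 0) (t : ℝ) :
    volume {x : E3 | (∑ p ∈ P, A p / ‖x - p‖) = t} = 0 := by
  classical
  set W : E3 → ℝ := fun x => ∑ p ∈ P, A p / ‖x - p‖ with hW
  have hmW : Measurable W := by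
    apply Finset.measurable_sum
    intro p _
    exact measurable_const.div ((continuous_id.sub continuous_const).norm.measurable)
  have hset : MeasurableSet {x : E3 | W x = t} := hmW (measurableSet_singleton t)
  have hT : MeasurePreserving (fun u : E3 => p₀ + u) volume volume :=
    measurePreserving_add_left volume p₀
  rw [← hT.measure_preimage hset.nullMeasurableSet]
  set Zt : Set E3 := (fun u : E3 => p₀ + u) ⁻¹' {x : E3 | W x = t} with hZt
  have hsplit : Zt ⊆ (Zt \ {0}) ∪ {0} := by
    intro u hu
    by_cases h : u = 0
    · exact Or.inr h
    · exact Or.inl ⟨hu, h⟩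
  refine measure_mono_null hsplit (measure_union_null ?_ (measure_singleton 0))
  -- pass to the subtype
  have himg : Zt \ {0} = (Subtype.val '' (Subtype.val ⁻¹' Zt : Set ({0}ᶜ : Set E3))) := by
    rw [Subtype.image_preimage_coe]
    ext u; simp [Set.mem_diff]; tauto
  rw [himg, ← comap_subtype_coe_apply (measurableSet_singleton (0:E3)).compl volume]
  set e := homeomorphUnitSphereProd E3 with he
  set C : Set (sphere (0:E3) 1 × Ioi (0:ℝ)) :=
    {z | W (p₀ + (z.2 : ℝ) • (z.1 : E3)) = t} with hC
  have hmC : MeasurableSet C := by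
    have hcont : Continuous fun z : sphere (0:E3) 1 × Ioi (0:ℝ) =>
        p₀ + (z.2 : ℝ) • (z.1 : E3) := by
      apply continuous_const.add
      exact (continuous_subtype_val.comp continuous_snd).smul
        (continuous_subtype_val.comp continuous_fst)
    exact (hmW.comp hcont.measurable) (measurableSet_singleton t)
  have hpre : (Subtype.val ⁻¹' Zt : Set ({0}ᶜ : Set E3)) = e ⁻¹' C := by
    ext u
    have hu0 : (u : E3) ≠ 0 := u.2
    have hnu : ‖(u : E3)‖ ≠ 0 := norm_ne_zero_iff.2 hu0
    simp only [Set.mem_preimage, hC, Set.mem_setOf_eq, hZt, he,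
      homeomorphUnitSphereProd_apply_fst_coe, homeomorphUnitSphereProd_apply_snd_coe]
    rw [smul_inv_smul₀ hnu]
  rw [hpre,
    ((volume : Measure E3).measurePreserving_homeomorphUnitSphereProd).measure_preimage
      hmC.nullMeasurableSet]
  rw [Measure.measure_prod_null hmC]
  -- bad directions
  set Bad : Set (sphere (0:E3) 1) :=
    {ω | ∃ p ∈ P, p ≠ p₀ ∧ (ω : E3) = ‖p - p₀‖⁻¹ • (p - p₀)} with hBad
  have hBadNull : (volume : Measure E3).toSphere Bad = 0 := by
    have hsub : Bad ⊆ ⋃ p ∈ (P : Set E3), {ω : sphere (0:E3) 1 | (ω : E3) = ‖p - p₀‖⁻¹ • (p - p₀)} := by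
      rintro ω ⟨p, hp, _, hω⟩
      exact Set.mem_biUnion hp hω
    refine measure_mono_null hsub ((measure_biUnion_null_iff P.finite_toSet.countable).2 ?_)
    intro p hp
    have hss : Set.Subsingleton {ω : sphere (0:E3) 1 | (ω : E3) = ‖p - p₀‖⁻¹ • (p - p₀)} := by
      intro a ha b hb
      exact Subtype.ext (ha.trans hb.symm)
    rcases hss.eq_empty_or_singleton with h | ⟨ω₁, h⟩
    · rw [h]; simp
    · rw [h]; exact toSphere_singleton_null ω₁
  have hae : ∀ᵐ ω ∂(volume : Measure E3).toSphere, ω ∉ Bad :=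
    measure_eq_zero_iff_ae_notMem.mp hBadNull
  filter_upwards [hae] with ω hωBad
  show Measure.volumeIoiPow _ (Prod.mk ω ⁻¹' C) = 0
  have h1 : ‖(ω : E3)‖ = 1 := mem_sphere_zero_iff_norm.mp ω.2
  have hgood : ∀ p ∈ P, p ≠ p₀ → ∀ s : ℝ, 0 < s → s • (ω : E3) ≠ p - p₀ := by
    intro p hp hpp s hs heq
    apply hωBad
    refine ⟨p, hp, hpp, ?_⟩
    have hsn : s = ‖p - p₀‖ := by
      rw [← heq, norm_smul, h1]
      simp [abs_of_pos hs]
    have h2 : (ω : E3) = s⁻¹ • (s • (ω : E3)) := (inv_smul_smul₀ hs.ne' _).symm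
    rw [h2, heq, hsn]
  have hZ := radial_countable P A p₀ hp₀ hA ω h1 hgood t
  have h0 : Measure.comap (Subtype.val) (volume : Measure ℝ) (Prod.mk ω ⁻¹' C) = 0 := by
    rw [comap_subtype_coe_apply measurableSet_Ioi]
    refine measure_mono_null ?_ (hZ.measure_zero _)
    rintro x ⟨s, hs, rfl⟩
    exact ⟨s.2, hs⟩
  exact (withDensity_absolutelyContinuous _ _) h0

/-- Hohenberg–Kohn theorem for Coulomb systems (abstract form): suppose each
index `v` in a family carries a Coulomb potential `pot v` (with singular set
`sing v`), a normalized ground state `Ψ v`, a density `ρ v` and an energy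
`En v`, such that equal densities force the variational a.e. identity
`(Σᵢ(v'−v)(xᵢ) − ΔE)·Ψ_v = 0`. Then the map `v ↦ ρ v` is injective: equal
densities imply equal potentials (off the singular sets), with no
additive-constant ambiguity. -/
theorem hohenberg_kohn_coulomb {N : ℕ} (hN : 1 ≤ N) {V : Type*}
    (pot : V → EuclideanSpace ℝ (Fin 3) → ℝ)
    (sing : V → Set (EuclideanSpace ℝ (Fin 3)))
    (hC : ∀ v, IsCoulombPot (pot v) (sing v))
    (Ψ : V → (Fin N → EuclideanSpace ℝ (Fin 3)) → ℂ)
    (ρ : V → EuclideanSpace ℝ (Fin 3) → ℝ) (En : V → ℝ)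
    (hnorm : ∀ v, ∫ X, ‖Ψ v X‖ ^ 2 ∂volume = 1)
    (hkey : ∀ v v', ρ v = ρ v' →
      ∀ᵐ X ∂volume,
        ((∑ i, ((pot v' (X i) - pot v (X i) : ℝ) : ℂ)) - ((En v' - En v : ℝ) : ℂ))
          * Ψ v X = 0) :
    ∀ v v', ρ v = ρ v' → ∀ x ∉ sing v ∪ sing v', pot v x = pot v' x := by
  classical
  intro v v' hρ
  obtain ⟨M, hM, Z, r, hrinj, hSr, hvr⟩ := hC v
  obtain ⟨M', hM', Z', r', hrinj', hSr', hvr'⟩ := hC v'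
  set P : Finset E3 := Finset.image r Finset.univ ∪ Finset.image r' Finset.univ with hP
  set A : E3 → ℝ :=
    fun p => (∑ j, if r j = p then Z j else 0) - (∑ j, if r' j = p then Z' j else 0) with hA
  set W : E3 → ℝ := fun x => ∑ p ∈ P, A p / ‖x - p‖ with hW
  -- representation of the difference
  have hrep : ∀ x ∉ sing v ∪ sing v', pot v' x - pot v x = W x := by
    intro x hx
    have hx1 : x ∉ sing v := fun h => hx (Or.inl h)
    have hx2 : x ∉ sing v' := fun h => hx (Or.inr h)
    rw [hvr x hx1, hvr' x hx2]
    have hexp : ∀ p ∈ P, A p / ‖x - p‖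
        = (∑ j, if r j = p then Z j / ‖x - p‖ else 0)
          - (∑ j, if r' j = p then Z' j / ‖x - p‖ else 0) := by
      intro p _
      rw [hA]
      rw [sub_div, Finset.sum_div, Finset.sum_div]
      congr 1 <;> (apply Finset.sum_congr rfl; intro j _; split <;> simp)
    have key : ∑ p ∈ P, A p / ‖x - p‖
        = (∑ j, Z j / ‖x - r j‖) - ∑ j, Z' j / ‖x - r' j‖ := by
      rw [Finset.sum_congr rfl hexp, Finset.sum_sub_distrib]
      rw [Finset.sum_comm (s := P), Finset.sum_comm (s := P)]
      have h1 : ∀ j : Fin M, (∑ p ∈ P, if r j = p then Z j / ‖x - p‖ else 0)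
          = Z j / ‖x - r j‖ := by
        intro j
        rw [Finset.sum_ite_eq P (r j) (fun p => Z j / ‖x - p‖)]
        simp [hP, Finset.mem_union, Finset.mem_image]
      have h2 : ∀ j : Fin M', (∑ p ∈ P, if r' j = p then Z' j / ‖x - p‖ else 0)
          = Z' j / ‖x - r' j‖ := by
        intro j
        rw [Finset.sum_ite_eq P (r' j) (fun p => Z' j / ‖x - p‖)]
        simp [hP, Finset.mem_union, Finset.mem_image]
      rw [Finset.sum_congr rfl (fun j _ => h1 j), Finset.sum_congr rfl (fun j _ => h2 j)]
    show _ = ∑ p ∈ P, A p / ‖x - p‖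
    rw [key]
    ring
  by_cases hall : ∀ p ∈ P, A p = 0
  · intro x hx
    have h0 : W x = 0 := by
      rw [hW]
      apply Finset.sum_eq_zero
      intro p hp
      rw [hall p hp, zero_div]
    have := hrep x hx
    rw [h0] at this
    linarith
  · exfalso
    push_neg at hall
    obtain ⟨p₀, hp₀, hAp₀⟩ := hall
    have hmW : Measurable W := by
      apply Finset.measurable_sum
      intro p _
      exact measurable_const.div ((continuous_id.sub continuous_const).norm.measurable)
    have hlev : ∀ t : ℝ, volume {x : E3 | W x = t} = 0 :=
      levelset_null P A p₀ hp₀ hAp₀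
    set c : ℝ := En v' - En v with hc
    have hsum_null : volume {X : Fin N → E3 | ∑ i, W (X i) = c} = 0 :=
      sum_level_null hmW hlev N hN c
    have hSS : volume (sing v ∪ sing v') = 0 := by
      apply measure_union_null
      · rw [hSr]; exact (Set.finite_range r).measure_zero _
      · rw [hSr']; exact (Set.finite_range r').measure_zero _
    have hbad_null : volume {X : Fin N → E3 | ∃ i, X i ∈ sing v ∪ sing v'} = 0 := by
      have hsub : {X : Fin N → E3 | ∃ i, X i ∈ sing v ∪ sing v'}
          ⊆ ⋃ i : Fin N, Function.eval i ⁻¹' (sing v ∪ sing v') := by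
        rintro X ⟨i, hi⟩
        exact Set.mem_iUnion.2 ⟨i, hi⟩
      refine measure_mono_null hsub (measure_iUnion_null fun i => ?_)
      rw [volume_pi]
      exact Measure.pi_eval_preimage_null _ hSS
    have hΨ0 : Ψ v =ᵐ[volume] (fun _ => (0:ℂ)) := by
      filter_upwards [hkey v v' hρ, measure_eq_zero_iff_ae_notMem.mp hsum_null,
        measure_eq_zero_iff_ae_notMem.mp hbad_null] with X hX hXs hXb
      have hco : ∀ i, X i ∉ sing v ∪ sing v' := by
        intro i hi
        exact hXb ⟨i, hi⟩
      have hsum : (∑ i, (pot v' (X i) - pot v (X i))) = ∑ i, W (X i) :=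
        Finset.sum_congr rfl fun i _ => hrep (X i) (hco i)
      have hne : ((∑ i, (pot v' (X i) - pot v (X i)) : ℝ) : ℂ) - ((En v' - En v : ℝ) : ℂ) ≠ 0 := by
        rw [sub_ne_zero]
        intro h
        apply hXs
        have := Complex.ofReal_inj.mp h
        rw [hsum] at this
        exact this
      have hfac : ((∑ i, ((pot v' (X i) - pot v (X i) : ℝ) : ℂ)) - ((En v' - En v : ℝ) : ℂ))
          = ((∑ i, (pot v' (X i) - pot v (X i)) : ℝ) : ℂ) - ((En v' - En v : ℝ) : ℂ) := by
        push_cast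
        ring
      rw [hfac] at hX
      exact (mul_eq_zero.mp hX).resolve_left hne
    have hint : ∫ X, ‖Ψ v X‖ ^ 2 ∂volume = 0 := by
      have : (fun X => ‖Ψ v X‖ ^ 2) =ᵐ[volume] (fun _ => (0:ℝ)) := by
        filter_upwards [hΨ0] with X hX
        rw [hX]
        simp
      rw [integral_congr_ae this, integral_zero]
    rw [hnorm v] at hint
    norm_num at hint
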